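/- In the expansivity proof for G_{f₀}: if (S,E) and (Š,Ě) have E = Ě and S ≠ Š, and n₀ is the first index where S and Š differ, then G_{f₀}^k(S,E) and G_{f₀}^k(Š,Ě) have equal second components for all k ≤ n₀, while after one more iteration the states differ in exactly two coordinates, so d(G_{f₀}^{n₀+1}(S,E), G_{f₀}^{n₀+1}(Š,Ě)) ≥ 2. -/

import Mathlib

open scoped BigOperators
open MeasureTheory ProbabilityTheory

namespace CI

/-- Strategies: sequences with values in {1,…,N}, encoded as `Fin N`. -/
abbrev Strat (N : ℕ) := ℕ → Fin N
/-- States of the system: boolean vectors of length N. -/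
abbrev CState (N : ℕ) := Fin N → Bool
/-- The phase space 𝒳 = {1,…,N}^ℕ × 𝔹^N. -/
abbrev Pt (N : ℕ) := Strat N × CState N

/-- d_e : sum of the discrete metric over the coordinates. -/
noncomputable def de {N : ℕ} (E F : CState N) : ℝ :=
  ∑ k : Fin N, if E k = F k then (0 : ℝ) else 1

/-- d_s(S,Š) = (9/N) Σ_{k≥1} |S^k − Š^k| / 10^k  (indices shifted to start at 0). -/
noncomputable def ds (N : ℕ) (S T : Strat N) : ℝ :=
  (9 / N) * ∑' k : ℕ, |((S k : ℝ)) - ((T k : ℝ))| / 10 ^ (k + 1)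

/-- The distance d = d_e + d_s on 𝒳. -/
noncomputable def dC {N : ℕ} (p q : Pt N) : ℝ := de p.2 q.2 + ds N p.1 q.1

/-- Flip bit k of the state E. -/
def bflip {N : ℕ} (k : Fin N) (E : CState N) : CState N :=
  fun j => if j = k then !(E j) else E j

/-- F_f(k,E): equal to E except possibly in coordinate k, where it is f(E)_k. -/
def Ff {N : ℕ} (f : CState N → CState N) (k : Fin N) (E : CState N) : CState N :=
  fun j => if j = k then f E k else E j

/-- The chaotic-iterations map G_f(S,E) = (σ(S), F_f(S^0,E)). -/
def Gf {N : ℕ} (f : CState N → CState N) (p : Pt N) : Pt N :=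
  (fun n => p.1 (n + 1), Ff f (p.1 0) p.2)

/-- The vectorial negation f₀. -/
def f0 {N : ℕ} (E : CState N) : CState N := fun j => !(E j)

/-- G_{f₀}. -/
def G0 {N : ℕ} : Pt N → Pt N := Gf f0

/-- Open ball for the distance dC. -/
def ballC {N : ℕ} (x : Pt N) (r : ℝ) : Set (Pt N) := {y | dC x y < r}

/-- Open sets of the metric space (𝒳,d). -/
def IsOpenC {N : ℕ} (U : Set (Pt N)) : Prop := ∀ x ∈ U, ∃ ε > 0, ballC x ε ⊆ U

/-- Iterating the flip-one-coordinate dynamics along a strategy. -/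
def runCI {N : ℕ} (S : ℕ → Fin N) (E : CState N) : ℕ → CState N
  | 0 => E
  | n + 1 => bflip (S n) (runCI S E n)

/-- The CIDS (cover-dependent) strategy: S^k = k if k ≤ N and X_k = 1, else S^k = 1
(indices encoded from 0, so "1" is `0 : Fin N`). -/
def cids {N : ℕ} [NeZero N] (X : CState N) : ℕ → Fin N :=
  fun k => if h : k < N then (if X ⟨k, h⟩ then ⟨k, h⟩ else 0) else 0


lemma Ff_f0 {N : ℕ} (k : Fin N) (E : CState N) : Ff f0 k E = bflip k E := by
  funext j; simp only [Ff, f0, bflip]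
  by_cases h : j = k <;> simp [h]

lemma runCI_shift {N : ℕ} (S : Strat N) (E : CState N) (k : ℕ) :
    runCI (fun n => S (n + 1)) (bflip (S 0) E) k = runCI S E (k + 1) := by
  induction k with
  | zero => rfl
  | succ k ih => simp only [runCI, ih]

lemma G0_iter {N : ℕ} (S : Strat N) (E : CState N) (k : ℕ) :
    G0^[k] (S, E) = (fun n => S (n + k), runCI S E k) := by
  induction k generalizing S E with
  | zero => simp [runCI]
  | succ k ih =>
    rw [Function.iterate_succ_apply]
    show G0^[k] ((fun n => S (n+1), Ff f0 (S 0) E) : Pt N) = _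
    rw [Ff_f0, ih, runCI_shift]
    refine Prod.ext ?_ rfl
    funext n; simp; ring_nf

lemma runCI_agree {N : ℕ} (S Sh : Strat N) (E : CState N) (n : ℕ)
    (h : ∀ k < n, S k = Sh k) : runCI S E n = runCI Sh E n := by
  induction n with
  | zero => rfl
  | succ n ih =>
    simp only [runCI, ih (fun k hk => h k (hk.trans (Nat.lt_succ_self n))),
      h n (Nat.lt_succ_self n)]

lemma hamming_bflip {N : ℕ} (a b : Fin N) (hab : a ≠ b) (X : CState N) :
    hammingDist (bflip a X) (bflip b X) = 2 := by
  have : (Finset.univ.filter fun j => bflip a X j ≠ bflip b X j) = {a, b} := by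
    ext j
    rw [Finset.mem_filter]
    simp only [Finset.mem_filter, Finset.mem_univ, true_and, Finset.mem_insert,
      Finset.mem_singleton, bflip]
    by_cases hja : j = a
    · subst hja; simp [hab, Ne.symm hab, Bool.eq_not_self]
    · by_cases hjb : j = b
      · subst hjb; simp [hja, Bool.not_eq_self]
      · simp [hja, hjb]
  rw [hammingDist, this, Finset.card_insert_of_notMem (by simp [hab]),
    Finset.card_singleton]

lemma de_eq_hamming {N : ℕ} (E F : CState N) : de E F = hammingDist E F := by
  rw [de, hammingDist, Finset.card_filter]
  push_cast
  refine Finset.sum_congr rfl fun k _ => ?_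
  by_cases h : E k = F k <;> simp [h]

lemma ds_nonneg {N : ℕ} (S T : Strat N) : 0 ≤ ds N S T := by
  apply mul_nonneg (by positivity)
  exact tsum_nonneg fun k => div_nonneg (abs_nonneg _) (by positivity)


theorem stmt9 {N : ℕ} [NeZero N] (S Sh : Strat N) (E : CState N) (n0 : ℕ)
    (hne : S n0 ≠ Sh n0) (hagree : ∀ k < n0, S k = Sh k) :
    (∀ k ≤ n0, (G0^[k] (S, E)).2 = (G0^[k] (Sh, E)).2) ∧
    hammingDist (G0^[n0 + 1] (S, E)).2 (G0^[n0 + 1] (Sh, E)).2 = 2 ∧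
    2 ≤ dC (G0^[n0 + 1] (S, E)) (G0^[n0 + 1] (Sh, E)) := by
  have hX : runCI S E n0 = runCI Sh E n0 := runCI_agree S Sh E n0 hagree
  have hst : (G0^[n0 + 1] (S, E)).2 = bflip (S n0) (runCI S E n0) := by
    rw [G0_iter]; rfl
  have hst' : (G0^[n0 + 1] (Sh, E)).2 = bflip (Sh n0) (runCI S E n0) := by
    rw [G0_iter, hX]; rfl
  have hham : hammingDist (G0^[n0 + 1] (S, E)).2 (G0^[n0 + 1] (Sh, E)).2 = 2 := by
    rw [hst, hst']; exact hamming_bflip _ _ hne _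
  refine ⟨fun k hk => ?_, hham, ?_⟩
  · rw [G0_iter, G0_iter]
    exact runCI_agree S Sh E k fun j hj => hagree j (hj.trans_le hk)
  · have h1 : de (G0^[n0 + 1] (S, E)).2 (G0^[n0 + 1] (Sh, E)).2 = 2 := by
      rw [de_eq_hamming, hham]; norm_num
    have h2 := ds_nonneg (G0^[n0 + 1] (S, E)).1 (G0^[n0 + 1] (Sh, E)).1
    rw [dC, h1]; linarith

end CI
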